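/- Let b, v₁,…,vₙ ∈ ℝ³ with indices mod n. Let A be the n×n symmetric matrix A_{ij} = (1/2)det(b,vᵢ,vⱼ) for i ≤ j (and A_{ji} = A_{ij}), and let B be the symmetric matrix with B_{ii} = −det(b,vᵢ₋₁,vᵢ₊₁)/(det(b,vᵢ₋₁,vᵢ)det(b,vᵢ,vᵢ₊₁)), B_{i,i+1} = 1/det(b,vᵢ,vᵢ₊₁), B_{1,n} = 1/det(b,v₁,vₙ), and all other entries zero. Assume all denominators are nonzero. Then B·A = I, i.e., A and B are mutually inverse. -/

import Mathlib

/-- The determinant of the 3×3 matrix with columns `a`, `b`, `c`. -/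
noncomputable def det3 (a b c : Fin 3 → ℝ) : ℝ :=
  Matrix.det (Matrix.of fun i j => ![a, b, c] j i)

lemma det3_swap (b x y : Fin 3 → ℝ) : det3 b x y = - det3 b y x := by
  simp [det3, Matrix.det_fin_three, Matrix.vecHead, Matrix.vecTail]; ring

lemma det3_self (b x : Fin 3 → ℝ) : det3 b x x = 0 := by
  simp [det3, Matrix.det_fin_three, Matrix.vecHead, Matrix.vecTail]

lemma det3_key (b w x y z : Fin 3 → ℝ) :
    det3 b y z * det3 b w x - det3 b x z * det3 b w y + det3 b w z * det3 b x y = 0 := by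
  simp [det3, Matrix.det_fin_three, Matrix.vecHead, Matrix.vecTail]; ring

noncomputable def eps {n : ℕ} (a c : Fin n) : ℝ := if a ≤ c then 1 else -1

lemma eps_mul_self {n : ℕ} (a c : Fin n) : eps a c * eps a c = 1 := by
  unfold eps; split_ifs <;> norm_num

lemma eps_antisymm {n : ℕ} {a c : Fin n} (h : a ≠ c) : eps c a = - eps a c := by
  have hv : (a : ℕ) ≠ (c : ℕ) := fun hh => h (Fin.ext hh)
  unfold eps
  simp only [Fin.le_def]
  split_ifs <;> (try norm_num) <;> omega

lemma eps_mul₁ {n : ℕ} (a c k : Fin n)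
    (hab : (a : ℕ) + 1 = (c : ℕ) ∨ ((c : ℕ) = 0 ∧ (a : ℕ) = n - 1))
    (hka : k ≠ a) (hkc : k ≠ c) : eps a c * eps a k = eps c k := by
  have h1 : (k : ℕ) ≠ (a : ℕ) := fun hh => hka (Fin.ext hh)
  have h2 : (k : ℕ) ≠ (c : ℕ) := fun hh => hkc (Fin.ext hh)
  have := a.isLt; have := c.isLt; have := k.isLt
  unfold eps
  simp only [Fin.le_def]
  split_ifs <;> (try norm_num) <;> omega

lemma eps_mul₂ {n : ℕ} (a c k : Fin n)
    (hab : (a : ℕ) + 1 = (c : ℕ) ∨ ((c : ℕ) = 0 ∧ (a : ℕ) = n - 1))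
    (hka : k ≠ a) (hkc : k ≠ c) : eps a c * eps c k = eps a k := by
  have h1 : (k : ℕ) ≠ (a : ℕ) := fun hh => hka (Fin.ext hh)
  have h2 : (k : ℕ) ≠ (c : ℕ) := fun hh => hkc (Fin.ext hh)
  have := a.isLt; have := c.isLt; have := k.isLt
  unfold eps
  simp only [Fin.le_def]
  split_ifs <;> (try norm_num) <;> omega

lemma diag_core (x y z D1 D2 E : ℝ) (h1 : D1 ≠ 0) (h2 : D2 ≠ 0)
    (hx : x * x = 1) (hy : y * y = 1) :
    x / D1 * (x * (1/2 * D1)) + -E/(D1*D2) * (z * (1/2 * 0)) + -y / D2 * (y * (1/2 * -D2)) = 1 := by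
  have t1 : x / D1 * (x * (1/2 * D1)) = x * x * (1/2) := by
    field_simp
  have t3 : -y / D2 * (y * (1/2 * -D2)) = y * y * (1/2) := by
    field_simp
  rw [t1, t3, hx, hy]; ring

lemma core_lemma (W X Y D1 D2 E : ℝ) (h1 : D1 ≠ 0) (h2 : D2 ≠ 0)
    (hkey : Y * D1 - X * E + W * D2 = 0) :
    (1/2 * W)/D1 + (1/2 * X) * (-E/(D1*D2)) + (1/2 * Y)/D2 = 0 := by
  have h : (1/2 * W)/D1 + (1/2 * X) * (-E/(D1*D2)) + (1/2 * Y)/D2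
      = (Y * D1 - X * E + W * D2) / (2 * D1 * D2) := by
    field_simp; ring
  rw [h, hkey, zero_div]

lemma val_q {n : ℕ} [NeZero n] (hn : 3 ≤ n) (i : Fin n) :
    ((i + 1 : Fin n) : ℕ) = if (i : ℕ) = n - 1 then 0 else (i : ℕ) + 1 := by
  have h1 : ((1 : Fin n) : ℕ) = 1 := by
    rw [Fin.val_one']; exact Nat.mod_eq_of_lt (by omega)
  have := i.isLt
  have key : ((i + 1 : Fin n) : ℕ) = ((i : ℕ) + 1) % n := by simp [Fin.add_def, h1]
  rw [key]
  by_cases h : (i : ℕ) = n - 1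
  · rw [if_pos h, h, show n - 1 + 1 = n by omega, Nat.mod_self]
  · rw [if_neg h]; exact Nat.mod_eq_of_lt (by omega)

lemma val_p {n : ℕ} [NeZero n] (hn : 3 ≤ n) (i : Fin n) :
    ((i - 1 : Fin n) : ℕ) = if (i : ℕ) = 0 then n - 1 else (i : ℕ) - 1 := by
  have h1 : ((1 : Fin n) : ℕ) = 1 := by
    rw [Fin.val_one']; exact Nat.mod_eq_of_lt (by omega)
  have := i.isLt
  have key : ((i - 1 : Fin n) : ℕ) = (n - 1 + (i : ℕ)) % n := by
    simp [Fin.sub_def]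
    rw [Nat.mod_eq_of_lt (show (1:ℕ) < n by omega)]
  rw [key]
  by_cases h : (i : ℕ) = 0
  · rw [if_pos h, h, Nat.add_zero]; exact Nat.mod_eq_of_lt (by omega)
  · rw [if_neg h, show n - 1 + (i : ℕ) = n + ((i : ℕ) - 1) by omega,
      Nat.add_mod_left]
    exact Nat.mod_eq_of_lt (by omega)

/-- The symmetric matrix `A_{ij} = (1/2)det(b,vᵢ,vⱼ)` (for
`i ≤ j`) and the symmetric almost-tridiagonal matrix `B` with
`B_{ii} = −det(b,vᵢ₋₁,vᵢ₊₁)/(det(b,vᵢ₋₁,vᵢ)det(b,vᵢ,vᵢ₊₁))` (cyclic indices),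
`B_{i,i+1} = 1/det(b,vᵢ,vᵢ₊₁)`, `B_{1,n} = 1/det(b,v₁,vₙ)`, other entries
zero, are mutually inverse: `B·A = I` and `A·B = I`. -/
theorem BA_eq_one (n : ℕ) [NeZero n] (hn : 3 ≤ n)
    (b : Fin 3 → ℝ) (v : Fin n → (Fin 3 → ℝ))
    (hden : ∀ i : Fin n, det3 b (v i) (v (i + 1)) ≠ 0)
    (A B : Matrix (Fin n) (Fin n) ℝ)
    (hA : ∀ i j : Fin n, A i j =
      if i ≤ j then (1 / 2) * det3 b (v i) (v j)
      else (1 / 2) * det3 b (v j) (v i))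
    (hB : ∀ i j : Fin n, B i j =
      if i = j then
        -(det3 b (v (i - 1)) (v (i + 1)))
          / (det3 b (v (i - 1)) (v i) * det3 b (v i) (v (i + 1)))
      else if (j : ℕ) = (i : ℕ) + 1 ∨ ((i : ℕ) = 0 ∧ (j : ℕ) = n - 1) then
        1 / det3 b (v i) (v j)
      else if (i : ℕ) = (j : ℕ) + 1 ∨ ((j : ℕ) = 0 ∧ (i : ℕ) = n - 1) then
        1 / det3 b (v j) (v i)
      else 0) :
    B * A = 1 ∧ A * B = 1 := by
  have hA' : ∀ j l : Fin n, A j l = eps j l * (1/2 * det3 b (v j) (v l)) := by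
    intro j l
    rw [hA]; unfold eps
    split_ifs with h
    · ring
    · rw [det3_swap b (v l) (v j)]; ring
  have hBA : B * A = 1 := by
    ext i k
    rw [Matrix.mul_apply, Matrix.one_apply]
    set p := i - 1 with hp
    set q := i + 1 with hq
    have hpv := val_p hn i
    have hqv := val_q hn i
    have hiLt := i.isLt
    have hkLt := k.isLt
    have hpi : p ≠ i := by
      rw [Ne, Fin.ext_iff]; rw [hpv]; split_ifs with h <;> omega
    have hqi : q ≠ i := by
      rw [Ne, Fin.ext_iff]; rw [hqv]; split_ifs with h <;> omega
    have hpq : p ≠ q := by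
      rw [Ne, Fin.ext_iff]; rw [hpv, hqv]; split_ifs with h h' <;> omega
    have hiq : i ≠ q := fun h => hqi h.symm
    have hp1 : p + 1 = i := by rw [hp]; exact sub_add_cancel i 1
    have hD1 : det3 b (v p) (v i) ≠ 0 := by have := hden p; rwa [hp1] at this
    have hD2 : det3 b (v i) (v q) ≠ 0 := hden i
    have hadjp : (p : ℕ) + 1 = (i : ℕ) ∨ ((i : ℕ) = 0 ∧ (p : ℕ) = n - 1) := by
      by_cases h : (i : ℕ) = 0
      · exact Or.inr ⟨h, by rw [hpv, if_pos h]⟩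
      · exact Or.inl (by rw [hpv, if_neg h]; omega)
    have hadjq : (i : ℕ) + 1 = (q : ℕ) ∨ ((q : ℕ) = 0 ∧ (i : ℕ) = n - 1) := by
      by_cases h : (i : ℕ) = n - 1
      · exact Or.inr ⟨by rw [hqv, if_pos h], h⟩
      · exact Or.inl (by rw [hqv, if_neg h])
    have hBii : B i i = -(det3 b (v p) (v q)) /
        (det3 b (v p) (v i) * det3 b (v i) (v q)) := by
      rw [hB, if_pos rfl]
    have hBiq : B i q = eps i q / det3 b (v i) (v q) := by
      rw [hB, if_neg hiq]
      by_cases h : (i : ℕ) = n - 1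
      · have hq0 : (q : ℕ) = 0 := by rw [hqv, if_pos h]
        rw [if_neg (by omega), if_pos (Or.inr ⟨hq0, h⟩)]
        rw [show eps i q = -1 by unfold eps; rw [if_neg (by rw [Fin.le_def]; omega)],
          det3_swap b (v i) (v q)]
        ring
      · have hq1 : (q : ℕ) = (i : ℕ) + 1 := by rw [hqv, if_neg h]
        rw [if_pos (Or.inl hq1)]
        rw [show eps i q = 1 by unfold eps; rw [if_pos (by rw [Fin.le_def]; omega)]]
    have hBip : B i p = eps p i / det3 b (v p) (v i) := by
      rw [hB, if_neg (fun h => hpi h.symm)]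
      by_cases h : (i : ℕ) = 0
      · have hpn : (p : ℕ) = n - 1 := by rw [hpv, if_pos h]
        rw [if_pos (Or.inr ⟨h, hpn⟩)]
        rw [show eps p i = -1 by unfold eps; rw [if_neg (by rw [Fin.le_def]; omega)],
          det3_swap b (v i) (v p)]
        ring
      · have hp1' : (p : ℕ) = (i : ℕ) - 1 := by rw [hpv, if_neg h]
        rw [if_neg (by omega), if_pos (Or.inl (by omega))]
        rw [show eps p i = 1 by unfold eps; rw [if_pos (by rw [Fin.le_def]; omega)]]
    have hz : ∀ j : Fin n, j ≠ p → j ≠ i → j ≠ q → B i j = 0 := by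
      intro j hjp hji hjq
      have hjLt := j.isLt
      rw [hB, if_neg (fun h => hji h.symm)]
      rw [if_neg, if_neg]
      · rintro (h | ⟨h1, h2⟩)
        · exact hjp (Fin.ext (by rw [hpv]; split_ifs with hh <;> omega))
        · exact hjq (Fin.ext (by rw [hqv]; split_ifs with hh <;> omega))
      · rintro (h | ⟨h1, h2⟩)
        · exact hjq (Fin.ext (by rw [hqv]; split_ifs with hh <;> omega))
        · exact hjp (Fin.ext (by rw [hpv]; split_ifs with hh <;> omega))
    have hsum : ∑ j, B i j * A j k =
        B i p * A p k + B i i * A i k + B i q * A q k := by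
      rw [show (Finset.univ : Finset (Fin n)).sum (fun j => B i j * A j k)
          = ({p, i, q} : Finset (Fin n)).sum (fun j => B i j * A j k) from
        (Finset.sum_subset (Finset.subset_univ _) (by
          intro j _ hj
          simp only [Finset.mem_insert, Finset.mem_singleton] at hj
          push_neg at hj
          rw [hz j hj.1 hj.2.1 hj.2.2, zero_mul])).symm]
      rw [Finset.sum_insert (by simp [hpi, hpq]),
        Finset.sum_insert (by simp [hiq]), Finset.sum_singleton, add_assoc]
    rw [hsum, hBip, hBii, hBiq, hA' p k, hA' i k, hA' q k]
    by_cases hik : i = k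
    · subst hik
      rw [if_pos rfl, det3_self]
      rw [det3_swap b (v q) (v i), eps_antisymm hqi]
      have e1 := eps_mul_self p i
      have e3 := eps_mul_self q i
      linear_combination diag_core (eps p i) (eps q i) (eps i i)
        (det3 b (v p) (v i)) (det3 b (v i) (v q)) (det3 b (v p) (v q)) hD1 hD2 e1 e3
    · rw [if_neg hik]
      have hki : k ≠ i := fun h => hik h.symm
      have h1 : eps p i / det3 b (v p) (v i) * (eps p k * (1/2 * det3 b (v p) (v k)))
          = eps i k * ((1/2 * det3 b (v p) (v k)) / det3 b (v p) (v i)) := by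
        by_cases hkp : k = p
        · subst hkp; rw [det3_self]; ring
        · rw [← eps_mul₁ p i k hadjp hkp hki]; ring
      have h3 : eps i q / det3 b (v i) (v q) * (eps q k * (1/2 * det3 b (v q) (v k)))
          = eps i k * ((1/2 * det3 b (v q) (v k)) / det3 b (v i) (v q)) := by
        by_cases hkq : k = q
        · subst hkq; rw [det3_self]; ring
        · rw [← eps_mul₂ i q k hadjq hki hkq]; ring
      have hcore := core_lemma (det3 b (v p) (v k)) (det3 b (v i) (v k))
        (det3 b (v q) (v k)) (det3 b (v p) (v i)) (det3 b (v i) (v q))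
        (det3 b (v p) (v q)) hD1 hD2 (det3_key b (v p) (v i) (v q) (v k))
      linear_combination eps i k * hcore + h1 + h3
  refine ⟨hBA, ?_⟩
  have hAs : A.transpose = A := by
    ext i j
    rw [Matrix.transpose_apply, hA, hA]
    rcases lt_trichotomy i j with h | rfl | h
    · rw [if_pos h.le, if_neg (not_le.mpr h)]
    · rfl
    · rw [if_neg (not_le.mpr h), if_pos h.le]
  have hBs : B.transpose = B := by
    ext i j
    rw [Matrix.transpose_apply, hB, hB]
    rcases eq_or_ne i j with rfl | h
    · rfl
    · have hv : (i : ℕ) ≠ (j : ℕ) := fun hh => h (Fin.ext hh)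
      have := i.isLt; have := j.isLt
      rw [if_neg h, if_neg (fun hh => h hh.symm)]
      split_ifs <;> first | rfl | (exfalso; omega)
  calc A * B = (B * A).transpose := by rw [Matrix.transpose_mul, hAs, hBs]
  _ = 1 := by rw [hBA, Matrix.transpose_one]
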